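/- (State Reduction.) Let N ≥ 1, let q ≥ 1 be an integer, and let x_0, …, x_{N−1} be nonnegative integers with ∑_k x_k = q. Let T be the set of probability vectors on N states that have at most two nonzero entries and all of whose entries are integer multiples of 1/q. Then the probability vector (x_0/q, …, x_{N−1}/q) lies in the family defined inductively by: each point mass δ_s and each element of T is realizable with cost 0; the N-state ½-pswitch is realizable with cost 1; and if p is realizable with cost a and r with cost b then p∗r and p⊕r are realizable with cost a+b — with total cost at most f(⌈log₂ q⌉, N). -/

import Mathlib

noncomputable section

/-- Series composition: distribution of `min` of two independent states. -/
def smin {N : ℕ} (p q : Fin N → ℝ) : Fin N → ℝ :=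
  fun k => ∑ i, ∑ j, if min i j = k then p i * q j else 0

/-- Parallel composition: distribution of `max` of two independent states. -/
def smax {N : ℕ} (p q : Fin N → ℝ) : Fin N → ℝ :=
  fun k => ∑ i, ∑ j, if max i j = k then p i * q j else 0

/-- The point mass at state `s`. -/
def delta {N : ℕ} (s : Fin N) : Fin N → ℝ := fun i => if i = s then 1 else 0

/-- A probability vector on `N` states. -/
def IsProbVec {N : ℕ} (p : Fin N → ℝ) : Prop :=
  (∀ i, 0 ≤ p i) ∧ ∑ i, p i = 1

/-- The `N`-state ½-pswitch: probability ½ on state `0`, ½ on state `N-1`,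
and `0` elsewhere. -/
def halfSwitch (N : ℕ) : Fin N → ℝ :=
  fun i => (if (i : ℕ) = 0 then (1 : ℝ) / 2 else 0) + (if (i : ℕ) = N - 1 then (1 : ℝ) / 2 else 0)

/-- The complexity function `f(n,N)`: `2^n - 1` for `n ≤ ⌈log₂ N⌉` and
`(N-1)(n - ⌈log₂ N⌉) + 2^{⌈log₂ N⌉} - 1` for `n ≥ ⌈log₂ N⌉`. -/
def f (n N : ℕ) : ℕ :=
  if n ≤ Nat.clog 2 N then 2 ^ n - 1
  else (N - 1) * (n - Nat.clog 2 N) + 2 ^ (Nat.clog 2 N) - 1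

/-- `Realizable2 S₀ S₁ p m`: `p` is obtained from point masses and elements of
`S₀` (cost 0 each) and elements of `S₁` (cost 1 each) by series and parallel
compositions, at total cost `m`. -/
inductive Realizable2 {N : ℕ} (S₀ S₁ : Set (Fin N → ℝ)) : (Fin N → ℝ) → ℕ → Prop
  | point (s : Fin N) : Realizable2 S₀ S₁ (delta s) 0
  | free {p : Fin N → ℝ} : p ∈ S₀ → Realizable2 S₀ S₁ p 0
  | paid {p : Fin N → ℝ} : p ∈ S₁ → Realizable2 S₀ S₁ p 1
  | series {p q : Fin N → ℝ} {a b : ℕ} :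
      Realizable2 S₀ S₁ p a → Realizable2 S₀ S₁ q b → Realizable2 S₀ S₁ (smin p q) (a + b)
  | parallel {p q : Fin N → ℝ} {a b : ℕ} :
      Realizable2 S₀ S₁ p a → Realizable2 S₀ S₁ q b → Realizable2 S₀ S₁ (smax p q) (a + b)

namespace StateReductionAux

/-- The free set of two-active-state vectors with entries multiples of `1/q`. -/
def S0 (N q : ℕ) : Set (Fin N → ℝ) :=
  {v | IsProbVec v ∧ (Finset.univ.filter fun i => v i ≠ 0).card ≤ 2 ∧
    ∀ i, ∃ c : ℕ, v i = (c : ℝ) / q}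

variable {N : ℕ}

/-- Exclusive cumulative sums of `x`. -/
def cum (x : Fin N → ℕ) (s : ℕ) : ℕ := ∑ i : Fin N, if (i : ℕ) < s then x i else 0

lemma cum_zero (x : Fin N → ℕ) : cum x 0 = 0 := by simp [cum]

lemma cum_mono (x : Fin N → ℕ) {s t : ℕ} (h : s ≤ t) : cum x s ≤ cum x t := by
  apply Finset.sum_le_sum
  intro i _
  split_ifs <;> omega

lemma cum_succ (x : Fin N → ℕ) (k : Fin N) : cum x ((k : ℕ) + 1) = cum x k + x k := by
  unfold cum
  have h : ∀ i : Fin N, (if (i : ℕ) < (k : ℕ) + 1 then x i else 0)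
      = (if (i : ℕ) < (k : ℕ) then x i else 0) + (if i = k then x i else 0) := by
    intro i
    rcases eq_or_ne i k with rfl | hne
    · simp
    · have hv : (i : ℕ) ≠ (k : ℕ) := fun h => hne (Fin.ext h)
      split_ifs <;> omega
  rw [Finset.sum_congr rfl fun i _ => h i, Finset.sum_add_distrib,
    Finset.sum_ite_eq' Finset.univ k x]
  simp

lemma cum_total (x : Fin N → ℕ) {s : ℕ} (h : N ≤ s) : cum x s = ∑ i, x i :=
  Finset.sum_congr rfl fun i _ => if_pos (lt_of_lt_of_le i.isLt h)

/-- Scaled boundaries. -/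
def Bnd (x : Fin N → ℕ) (n s : ℕ) : ℕ := 2 ^ n * cum x s

lemma Bnd_mono (x : Fin N → ℕ) (n : ℕ) {s t : ℕ} (h : s ≤ t) : Bnd x n s ≤ Bnd x n t :=
  Nat.mul_le_mul le_rfl (cum_mono x h)

lemma Bnd_zero (x : Fin N → ℕ) (n : ℕ) : Bnd x n 0 = 0 := by
  unfold Bnd; rw [cum_zero, mul_zero]

/-- Mass of state `k` in the window `[a,b)`. -/
def nodeNum (x : Fin N → ℕ) (n a b k : ℕ) : ℕ :=
  min b (max a (Bnd x n (k + 1))) - min b (max a (Bnd x n k))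

/-- The conditional distribution of the window `[a,b)`. -/
def nodeVec (x : Fin N → ℕ) (n a b : ℕ) : Fin N → ℝ :=
  fun k => (nodeNum x n a b (k : ℕ) : ℝ) / ((b - a : ℕ) : ℝ)

lemma sum_nodeNum (x : Fin N → ℕ) (n a b : ℕ) (hab : a ≤ b) (hb : b ≤ Bnd x n N) :
    ∑ k : Fin N, (nodeNum x n a b (k : ℕ) : ℝ) = (b : ℝ) - a := by
  have hmono : ∀ s t : ℕ, s ≤ t → min b (max a (Bnd x n s)) ≤ min b (max a (Bnd x n t)) := by
    intro s t hst
    have := Bnd_mono x n hst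
    omega
  have hcast : ∀ kk : ℕ, (nodeNum x n a b kk : ℝ)
      = ((min b (max a (Bnd x n (kk + 1))) : ℕ) : ℝ) - ((min b (max a (Bnd x n kk)) : ℕ) : ℝ) := by
    intro kk
    unfold nodeNum
    rw [Nat.cast_sub (hmono _ _ (Nat.le_succ kk))]
  calc ∑ k : Fin N, (nodeNum x n a b (k : ℕ) : ℝ)
      = ∑ k : Fin N, ((fun kk : ℕ => ((min b (max a (Bnd x n (kk + 1))) : ℕ) : ℝ)
          - ((min b (max a (Bnd x n kk)) : ℕ) : ℝ)) (k : ℕ)) :=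
        Finset.sum_congr rfl fun k _ => hcast k
    _ = ∑ kk ∈ Finset.range N, (((min b (max a (Bnd x n (kk + 1))) : ℕ) : ℝ)
          - ((min b (max a (Bnd x n kk)) : ℕ) : ℝ)) := by
        exact Fin.sum_univ_eq_sum_range
          (fun kk => ((min b (max a (Bnd x n (kk + 1))) : ℕ) : ℝ)
            - ((min b (max a (Bnd x n kk)) : ℕ) : ℝ)) N
    _ = ((min b (max a (Bnd x n N)) : ℕ) : ℝ) - ((min b (max a (Bnd x n 0)) : ℕ) : ℝ) :=
        Finset.sum_range_sub (fun s => ((min b (max a (Bnd x n s)) : ℕ) : ℝ)) N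
    _ = (b : ℝ) - a := by
        have h0 : Bnd x n 0 = 0 := Bnd_zero x n
        have h1 : min b (max a (Bnd x n N)) = b := by omega
        have h2 : min b (max a (Bnd x n 0)) = a := by omega
        rw [h1, h2]

lemma node_sum_one (x : Fin N → ℕ) (n a b : ℕ) (hab : a < b) (hb : b ≤ Bnd x n N) :
    ∑ k, nodeVec x n a b k = 1 := by
  unfold nodeVec
  rw [← Finset.sum_div, sum_nodeNum x n a b hab.le hb, Nat.cast_sub hab.le]
  have : (a : ℝ) < b := by exact_mod_cast hab
  exact div_self (by linarith)

lemma node_prob (x : Fin N → ℕ) (n a b : ℕ) (hab : a < b) (hb : b ≤ Bnd x n N) :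
    IsProbVec (nodeVec x n a b) :=
  ⟨fun i => div_nonneg (Nat.cast_nonneg _) (Nat.cast_nonneg _), node_sum_one x n a b hab hb⟩

lemma node_supp (x : Fin N → ℕ) (n a b : ℕ) {k : Fin N} (h : nodeVec x n a b k ≠ 0) :
    Bnd x n (k : ℕ) < b ∧ a < Bnd x n ((k : ℕ) + 1) ∧ Bnd x n (k : ℕ) < Bnd x n ((k : ℕ) + 1) := by
  have hnum : nodeNum x n a b (k : ℕ) ≠ 0 := by
    intro h0
    exact h (by simp [nodeVec, h0])
  have hmono : Bnd x n (k : ℕ) ≤ Bnd x n ((k : ℕ) + 1) := Bnd_mono x n (Nat.le_succ _)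
  unfold nodeNum at hnum
  omega

lemma sort3 {α : Type*} [LinearOrder α] {P : α → Prop} {u v w : α}
    (hu : P u) (hv : P v) (hw : P w) (h1 : u ≠ v) (h2 : u ≠ w) (h3 : v ≠ w) :
    ∃ a b c, P a ∧ P b ∧ P c ∧ a < b ∧ b < c := by
  rcases h1.lt_or_gt with h1 | h1 <;> rcases h2.lt_or_gt with h2 | h2 <;>
    rcases h3.lt_or_gt with h3 | h3
  · exact ⟨u, v, w, hu, hv, hw, h1, h3⟩
  · exact ⟨u, w, v, hu, hw, hv, h2, h3⟩
  · exact absurd (h1.trans h3) (lt_asymm h2)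
  · exact ⟨w, u, v, hw, hu, hv, h2, h1⟩
  · exact ⟨v, u, w, hv, hu, hw, h1, h2⟩
  · exact absurd (h2.trans h3) (lt_asymm h1)
  · exact ⟨v, w, u, hv, hw, hu, h3, h2⟩
  · exact ⟨w, v, u, hw, hv, hu, h3, h1⟩

lemma leaf_free (q n : ℕ) (hq : 0 < q) (x : Fin N → ℕ) (hqn : q ≤ 2 ^ n)
    (a b : ℕ) (hb : b = a + q) (hb2 : b ≤ Bnd x n N) :
    nodeVec x n a b ∈ S0 N q := by
  have hab : a < b := by omega
  refine ⟨node_prob x n a b hab hb2, ?_, ?_⟩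
  · -- at most two active states
    by_contra hc
    have hc2 : 2 < (Finset.univ.filter fun i => nodeVec x n a b i ≠ 0).card := by omega
    rw [Finset.two_lt_card_iff] at hc2
    obtain ⟨u, v, w, hu, hv, hw, huv, huw, hvw⟩ := hc2
    rw [Finset.mem_filter] at hu hv hw
    obtain ⟨k₁, k₂, k₃, p1, p2, p3, h12, h23⟩ :=
      sort3 (P := fun k => nodeVec x n a b k ≠ 0) hu.2 hv.2 hw.2 huv huw hvw
    obtain ⟨q1, q2, q3⟩ := node_supp x n a b p1
    obtain ⟨r1, r2, r3⟩ := node_supp x n a b p2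
    obtain ⟨s1, s2, s3⟩ := node_supp x n a b p3
    have m12 : Bnd x n ((k₁ : ℕ) + 1) ≤ Bnd x n (k₂ : ℕ) := Bnd_mono x n (by
      have : (k₁ : ℕ) < (k₂ : ℕ) := h12
      omega)
    have m23 : Bnd x n ((k₂ : ℕ) + 1) ≤ Bnd x n (k₃ : ℕ) := Bnd_mono x n (by
      have : (k₂ : ℕ) < (k₃ : ℕ) := h23
      omega)
    have hcumlt : cum x ((k₁ : ℕ) + 1) < cum x ((k₂ : ℕ) + 1) := by
      have hB : Bnd x n ((k₁ : ℕ) + 1) < Bnd x n ((k₂ : ℕ) + 1) := by omega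
      exact lt_of_mul_lt_mul_left hB (Nat.zero_le _)
    have key : Bnd x n ((k₁ : ℕ) + 1) + 2 ^ n ≤ Bnd x n ((k₂ : ℕ) + 1) := by
      have h1 : 2 ^ n * (cum x ((k₁ : ℕ) + 1) + 1) ≤ 2 ^ n * cum x ((k₂ : ℕ) + 1) :=
        Nat.mul_le_mul le_rfl (by omega)
      have h2 : 2 ^ n * (cum x ((k₁ : ℕ) + 1) + 1)
          = Bnd x n ((k₁ : ℕ) + 1) + 2 ^ n := by unfold Bnd; ring
      unfold Bnd
      unfold Bnd at h2
      omega
    omega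
  · -- entries are multiples of 1/q
    intro i
    refine ⟨nodeNum x n a b (i : ℕ), ?_⟩
    unfold nodeVec
    rw [show b - a = q by omega]

lemma node_split (x : Fin N → ℕ) (n a m b : ℕ) (ham : a ≤ m) (hmb : m ≤ b) (k : ℕ) :
    nodeNum x n a b k = nodeNum x n a m k + nodeNum x n m b k := by
  have := Bnd_mono x n (Nat.le_succ k)
  unfold nodeNum
  omega

lemma node_half (x : Fin N → ℕ) (n a m b : ℕ) (hm : b = m + (m - a)) (hlt : a < m) :
    nodeVec x n a b = fun k => (nodeVec x n a m k + nodeVec x n m b k) / 2 := by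
  have ham : a ≤ m := hlt.le
  have hmb : m ≤ b := by omega
  funext k
  unfold nodeVec
  rw [node_split x n a m b ham hmb]
  have hba : ((b - a : ℕ) : ℝ) = 2 * ((m - a : ℕ) : ℝ) := by
    rw [show b - a = 2 * (m - a) by omega]
    push_cast
    ring
  have hbm : ((b - m : ℕ) : ℝ) = ((m - a : ℕ) : ℝ) := by
    rw [show b - m = m - a by omega]
  have hpos : (0 : ℝ) < ((m - a : ℕ) : ℝ) := by
    have : 0 < m - a := by omega
    exact_mod_cast this
  rw [hba, hbm]
  push_cast
  field_simp

lemma node_sep (hN : 0 < N) (x : Fin N → ℕ) (n a m b : ℕ) :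
    ∃ k₀ : Fin N, (∀ k : Fin N, nodeVec x n a m k ≠ 0 → k ≤ k₀) ∧
      (∀ k : Fin N, nodeVec x n m b k ≠ 0 → k₀ ≤ k) := by
  classical
  obtain ⟨k₀, hk₀mem, hk₀max⟩ :
      ∃ k₀ : Fin N, Bnd x n (k₀ : ℕ) ≤ m ∧ ∀ k : Fin N, Bnd x n (k : ℕ) ≤ m → k ≤ k₀ := by
    have hne : (Finset.univ.filter (fun k : Fin N => Bnd x n (k : ℕ) ≤ m)).Nonempty := by
      refine ⟨⟨0, hN⟩, ?_⟩
      rw [Finset.mem_filter]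
      refine ⟨Finset.mem_univ _, ?_⟩
      have h0 := Bnd_zero x n
      have he : ((⟨0, hN⟩ : Fin N) : ℕ) = 0 := rfl
      rw [he, h0]
      omega
    refine ⟨(Finset.univ.filter (fun k : Fin N => Bnd x n (k : ℕ) ≤ m)).max' hne, ?_, ?_⟩
    · have hmem := Finset.max'_mem _ hne
      rw [Finset.mem_filter] at hmem
      exact hmem.2
    · intro k hk
      exact Finset.le_max' _ k (by rw [Finset.mem_filter]; exact ⟨Finset.mem_univ _, hk⟩)
  refine ⟨k₀, ?_, ?_⟩
  · intro k hk
    obtain ⟨h1, h2, h3⟩ := node_supp x n a m hk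
    exact hk₀max k (by omega)
  · intro k hk
    obtain ⟨h1, h2, h3⟩ := node_supp x n m b hk
    by_contra hcon
    push_neg at hcon
    have hle : (k : ℕ) + 1 ≤ (k₀ : ℕ) := by
      have : (k : ℕ) < (k₀ : ℕ) := hcon
      omega
    have := Bnd_mono x n hle
    omega

/-- Number of strict interior boundaries of the window `[a,b)`. -/
def IB (x : Fin N → ℕ) (n a b : ℕ) : ℕ :=
  ((Finset.Ioo 0 N).filter fun s => a < Bnd x n s ∧ Bnd x n s < b).card

lemma IB_le (x : Fin N → ℕ) (n a b : ℕ) : IB x n a b ≤ N - 1 := by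
  refine le_trans (Finset.card_filter_le _ _) ?_
  rw [Nat.card_Ioo]
  omega

lemma IB_split (x : Fin N → ℕ) (n a m b : ℕ) (ham : a ≤ m) (hmb : m ≤ b) :
    IB x n a m + IB x n m b ≤ IB x n a b := by
  classical
  unfold IB
  have hdis : Disjoint ((Finset.Ioo 0 N).filter fun s => a < Bnd x n s ∧ Bnd x n s < m)
      ((Finset.Ioo 0 N).filter fun s => m < Bnd x n s ∧ Bnd x n s < b) := by
    rw [Finset.disjoint_left]
    intro s hs1 hs2
    rw [Finset.mem_filter] at hs1 hs2
    omega
  rw [← Finset.card_union_of_disjoint hdis]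
  apply Finset.card_le_card
  intro s hsm
  rw [Finset.mem_union, Finset.mem_filter, Finset.mem_filter] at hsm
  rw [Finset.mem_filter]
  rcases hsm with h | h <;> exact ⟨h.1, by omega⟩

lemma leaf_IB0 (q n : ℕ) (hq : 0 < q) (x : Fin N → ℕ)
    (d a b : ℕ) (hb : b = a + 2 ^ d * q) (hb2 : b ≤ Bnd x n N) (hIB : IB x n a b = 0) :
    nodeVec x n a b ∈ S0 N q := by
  classical
  have hpow : 0 < 2 ^ d := by positivity
  have hab : a < b := by
    have : 0 < 2 ^ d * q := Nat.mul_pos hpow hq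
    omega
  have hnab : ∀ s : ℕ, 0 < s → s < N → ¬(a < Bnd x n s ∧ Bnd x n s < b) := by
    intro s hs1 hs2 hcon
    have hmem : s ∈ (Finset.Ioo 0 N).filter fun s => a < Bnd x n s ∧ Bnd x n s < b := by
      rw [Finset.mem_filter, Finset.mem_Ioo]
      exact ⟨⟨hs1, hs2⟩, hcon⟩
    have := Finset.card_pos.mpr ⟨s, hmem⟩
    unfold IB at hIB
    omega
  have hval : ∀ k : Fin N, nodeVec x n a b k ≠ 0 → nodeVec x n a b k = 1 := by
    intro k hk
    obtain ⟨h1, h2, h3⟩ := node_supp x n a b hk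
    have hB1 : b ≤ Bnd x n ((k : ℕ) + 1) := by
      rcases Nat.lt_or_ge ((k : ℕ) + 1) N with hlt | hge
      · by_contra hcon
        push_neg at hcon
        exact hnab _ (Nat.succ_pos _) hlt ⟨h2, hcon⟩
      · exact le_trans hb2 (Bnd_mono x n hge)
    have hB0 : Bnd x n (k : ℕ) ≤ a := by
      rcases Nat.eq_zero_or_pos (k : ℕ) with h0 | hpos
      · rw [h0, Bnd_zero]
        omega
      · by_contra hcon
        push_neg at hcon
        exact hnab _ hpos k.isLt ⟨hcon, h1⟩
    have hnum : nodeNum x n a b (k : ℕ) = b - a := by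
      unfold nodeNum
      omega
    unfold nodeVec
    rw [hnum]
    apply div_self
    have : (0 : ℕ) < b - a := by omega
    have : (0 : ℝ) < ((b - a : ℕ) : ℝ) := by exact_mod_cast this
    linarith
  have hsum := node_sum_one x n a b hab hb2
  refine ⟨node_prob x n a b hab hb2, ?_, ?_⟩
  · by_contra hc
    have hc1 : 1 < (Finset.univ.filter fun i => nodeVec x n a b i ≠ 0).card := by omega
    rw [Finset.one_lt_card] at hc1
    obtain ⟨k₁, hk₁, k₂, hk₂, hne⟩ := hc1
    rw [Finset.mem_filter] at hk₁ hk₂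
    have e1 := hval k₁ hk₁.2
    have e2 := hval k₂ hk₂.2
    have hle : nodeVec x n a b k₁ + nodeVec x n a b k₂ ≤ ∑ k, nodeVec x n a b k := by
      have hsub : ({k₁, k₂} : Finset (Fin N)) ⊆ Finset.univ := Finset.subset_univ _
      have := Finset.sum_le_sum_of_subset_of_nonneg (f := nodeVec x n a b) hsub
        (fun i _ _ => div_nonneg (Nat.cast_nonneg _) (Nat.cast_nonneg _))
      rwa [Finset.sum_pair hne] at this
    rw [e1, e2, hsum] at hle
    norm_num at hle
  · intro i
    by_cases hi : nodeVec x n a b i = 0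
    · exact ⟨0, by simp [hi]⟩
    · refine ⟨q, ?_⟩
      rw [hval i hi, div_self (Nat.cast_ne_zero.mpr hq.ne' : (q : ℝ) ≠ 0)]

lemma smax_delta_bot (h0 : 0 < N) (l : Fin N → ℝ) :
    smax (delta (⟨0, h0⟩ : Fin N)) l = l := by
  funext k
  show ∑ i, ∑ j, (if max i j = k then delta (⟨0, h0⟩ : Fin N) i * l j else 0) = l k
  rw [Fintype.sum_eq_single (⟨0, h0⟩ : Fin N) (fun i hi => by
    have hd : delta (⟨0, h0⟩ : Fin N) i = 0 := by simp [delta, hi]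
    simp [hd])]
  have hmax : ∀ j : Fin N, max (⟨0, h0⟩ : Fin N) j = j := fun j =>
    max_eq_right (by simp [Fin.le_def])
  have hd : delta (⟨0, h0⟩ : Fin N) (⟨0, h0⟩ : Fin N) = 1 := by simp [delta]
  simp only [hmax, hd, one_mul]
  rw [Finset.sum_ite_eq' Finset.univ k l]
  simp

lemma smin_half_eq (hN2 : 2 ≤ N) (r : Fin N → ℝ) (hr : ∑ j, r j = 1) :
    smin (halfSwitch N) r
      = fun i => (1 / 2 : ℝ) * delta (⟨0, by omega⟩ : Fin N) i + (1 / 2) * r i := by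
  have h0 : 0 < N := by omega
  funext k
  show ∑ i, ∑ j, (if min i j = k then halfSwitch N i * r j else 0) = _
  have hzt : (⟨0, h0⟩ : Fin N) ≠ (⟨N - 1, by omega⟩ : Fin N) := by
    simp only [ne_eq, Fin.mk.injEq]
    omega
  rw [Fintype.sum_eq_add (⟨0, h0⟩ : Fin N) (⟨N - 1, by omega⟩ : Fin N) hzt (fun i hi => by
    have hv : halfSwitch N i = 0 := by
      have h1 : (i : ℕ) ≠ 0 := by
        intro hc
        exact hi.1 (Fin.ext hc)
      have h2 : (i : ℕ) ≠ N - 1 := by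
        intro hc
        exact hi.2 (Fin.ext hc)
      simp [halfSwitch, h1, h2]
    simp [hv])]
  have hval1 : halfSwitch N (⟨0, h0⟩ : Fin N) = 1 / 2 := by
    have h1 : ((⟨0, h0⟩ : Fin N) : ℕ) = 0 := rfl
    have h2 : ¬(((⟨0, h0⟩ : Fin N) : ℕ) = N - 1) := by
      rw [h1]
      omega
    simp [halfSwitch, h1, h2]
  have hval2 : halfSwitch N (⟨N - 1, by omega⟩ : Fin N) = 1 / 2 := by
    have h1 : ((⟨N - 1, by omega⟩ : Fin N) : ℕ) = N - 1 := rfl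
    have h2 : ¬(((⟨N - 1, by omega⟩ : Fin N) : ℕ) = 0) := by
      rw [h1]
      omega
    simp [halfSwitch, h1, h2]
  have hmin1 : ∀ j : Fin N, min (⟨0, h0⟩ : Fin N) j = (⟨0, h0⟩ : Fin N) := fun j =>
    min_eq_left (by simp [Fin.le_def])
  have hmin2 : ∀ j : Fin N, min (⟨N - 1, by omega⟩ : Fin N) j = j := fun j =>
    min_eq_right (by
      simp only [Fin.le_def]
      have := j.isLt
      omega)
  have hsum1 : ∑ j, (if min (⟨0, h0⟩ : Fin N) j = k then halfSwitch N (⟨0, h0⟩ : Fin N) * r j else 0)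
      = (1 / 2 : ℝ) * delta (⟨0, h0⟩ : Fin N) k := by
    simp only [hmin1, hval1]
    by_cases hzk : (⟨0, h0⟩ : Fin N) = k
    · subst hzk
      simp only [if_pos rfl, delta, mul_one, if_true]
      rw [← Finset.mul_sum, hr, mul_one]
    · have hkz : ¬(k = (⟨0, h0⟩ : Fin N)) := fun hc => hzk hc.symm
      simp [hzk, delta, hkz]
  have hsum2 : ∑ j, (if min (⟨N - 1, by omega⟩ : Fin N) j = k
        then halfSwitch N (⟨N - 1, by omega⟩ : Fin N) * r j else 0)
      = (1 / 2 : ℝ) * r k := by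
    simp only [hmin2, hval2]
    rw [Finset.sum_ite_eq' Finset.univ k (fun j => (1 / 2 : ℝ) * r j)]
    simp
  rw [hsum1, hsum2]

lemma mix (hN2 : 2 ≤ N) (l r : Fin N → ℝ) (hl1 : ∑ j, l j = 1) (hr1 : ∑ j, r j = 1)
    (k₀ : Fin N) (hl : ∀ j, l j ≠ 0 → j ≤ k₀) (hr : ∀ i, r i ≠ 0 → k₀ ≤ i) :
    smax (smin (halfSwitch N) r) l = fun k => (l k + r k) / 2 := by
  have h0 : 0 < N := by omega
  rw [smin_half_eq hN2 r hr1]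
  funext k
  show ∑ i, ∑ j, (if max i j = k
      then ((1 / 2 : ℝ) * delta (⟨0, h0⟩ : Fin N) i + (1 / 2) * r i) * l j else 0) = (l k + r k) / 2
  have step1 : ∀ i j : Fin N, (if max i j = k
        then ((1 / 2 : ℝ) * delta (⟨0, h0⟩ : Fin N) i + (1 / 2) * r i) * l j else 0)
      = (1 / 2 : ℝ) * (if max i j = k then delta (⟨0, h0⟩ : Fin N) i * l j else 0)
        + (1 / 2 : ℝ) * (if max i j = k then r i * l j else 0) := by
    intro i j
    split_ifs <;> ring
  have hdelta : ∑ i, ∑ j, (if max i j = k then delta (⟨0, h0⟩ : Fin N) i * l j else 0) = l k :=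
    congrFun (smax_delta_bot h0 l) k
  have hsep : ∑ i, ∑ j, (if max i j = k then r i * l j else 0) = r k := by
    have hij : ∀ i j : Fin N, (if max i j = k then r i * l j else 0)
        = (if i = k then r i * l j else 0) := by
      intro i j
      by_cases hri : r i = 0
      · simp [hri]
      by_cases hlj : l j = 0
      · simp [hlj]
      have hmax : max i j = i := max_eq_left ((hl j hlj).trans (hr i hri))
      rw [hmax]
    simp_rw [hij]
    have hin : ∀ i : Fin N, ∑ j, (if i = k then r i * l j else 0)
        = if i = k then r i * (∑ j, l j) else 0 := by
      intro i
      split_ifs with h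
      · rw [Finset.mul_sum]
      · exact Finset.sum_const_zero
    simp_rw [hin]
    rw [Finset.sum_ite_eq' Finset.univ k (fun i => r i * (∑ j, l j))]
    simp [hl1]
  calc ∑ i, ∑ j, (if max i j = k
        then ((1 / 2 : ℝ) * delta (⟨0, h0⟩ : Fin N) i + (1 / 2) * r i) * l j else 0)
      = ∑ i, ∑ j, ((1 / 2 : ℝ) * (if max i j = k then delta (⟨0, h0⟩ : Fin N) i * l j else 0)
        + (1 / 2 : ℝ) * (if max i j = k then r i * l j else 0)) :=
        Finset.sum_congr rfl fun i _ => Finset.sum_congr rfl fun j _ => step1 i j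
    _ = (1 / 2 : ℝ) * (∑ i, ∑ j, (if max i j = k then delta (⟨0, h0⟩ : Fin N) i * l j else 0))
        + (1 / 2 : ℝ) * (∑ i, ∑ j, (if max i j = k then r i * l j else 0)) := by
        simp only [Finset.sum_add_distrib, Finset.mul_sum]
    _ = (l k + r k) / 2 := by
        rw [hdelta, hsep]
        ring

/-- Budget at depth `d` with `I` interior boundaries. -/
def W (d I : ℕ) : ℕ := ∑ t ∈ Finset.range d, min (2 ^ t) I

lemma W_mono (d : ℕ) {I J : ℕ} (h : I ≤ J) : W d I ≤ W d J :=
  Finset.sum_le_sum fun t _ => by omega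

lemma W_step (d : ℕ) {I I₁ I₂ : ℕ} (hI : 1 ≤ I) (hsum : I₁ + I₂ ≤ I) :
    1 + W d I₁ + W d I₂ ≤ W (d + 1) I := by
  unfold W
  rw [Finset.sum_range_succ']
  have hterm : ∀ t ∈ Finset.range d, min (2 ^ t) I₁ + min (2 ^ t) I₂ ≤ min (2 ^ (t + 1)) I := by
    intro t _
    have h2 : 2 ^ (t + 1) = 2 ^ t + 2 ^ t := by ring
    omega
  have hsum2 : ∑ t ∈ Finset.range d, (min (2 ^ t) I₁ + min (2 ^ t) I₂)
      ≤ ∑ t ∈ Finset.range d, min (2 ^ (t + 1)) I := Finset.sum_le_sum hterm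
  rw [Finset.sum_add_distrib] at hsum2
  have h0 : min (2 ^ 0) I = 1 := by
    have : (2 : ℕ) ^ 0 = 1 := pow_zero 2
    omega
  omega

lemma geom_sum (d : ℕ) : ∑ t ∈ Finset.range d, 2 ^ t = 2 ^ d - 1 := by
  induction d with
  | zero => simp
  | succ d ih =>
    rw [Finset.sum_range_succ, ih]
    have h1 : 1 ≤ 2 ^ d := Nat.one_le_two_pow
    have h2 : 2 ^ (d + 1) = 2 ^ d + 2 ^ d := by ring
    omega

lemma W_le_f (n M : ℕ) : W n (M - 1) ≤ f n M := by
  unfold f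
  split_ifs with h
  · calc W n (M - 1) ≤ ∑ t ∈ Finset.range n, 2 ^ t :=
        Finset.sum_le_sum fun t _ => min_le_left _ _
      _ = 2 ^ n - 1 := geom_sum n
  · push_neg at h
    set L := Nat.clog 2 M with hL
    unfold W
    rw [Finset.range_eq_Ico, ← Finset.sum_Ico_consecutive _ (Nat.zero_le L) h.le]
    have h1 : ∑ t ∈ Finset.Ico 0 L, min (2 ^ t) (M - 1) ≤ 2 ^ L - 1 := by
      calc ∑ t ∈ Finset.Ico 0 L, min (2 ^ t) (M - 1)
          ≤ ∑ t ∈ Finset.Ico 0 L, 2 ^ t := Finset.sum_le_sum fun t _ => min_le_left _ _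
        _ = 2 ^ L - 1 := by rw [← Finset.range_eq_Ico]; exact geom_sum L
    have h2 : ∑ t ∈ Finset.Ico L n, min (2 ^ t) (M - 1) ≤ (n - L) * (M - 1) := by
      calc ∑ t ∈ Finset.Ico L n, min (2 ^ t) (M - 1)
          ≤ ∑ t ∈ Finset.Ico L n, (M - 1) := Finset.sum_le_sum fun t _ => min_le_right _ _
        _ = (n - L) * (M - 1) := by rw [Finset.sum_const, Nat.card_Ico, smul_eq_mul]
    have h3 : 1 ≤ 2 ^ L := Nat.one_le_two_pow
    have h4 : (n - L) * (M - 1) = (M - 1) * (n - L) := Nat.mul_comm _ _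
    omega

lemma rec_main (hN : 0 < N) (q n : ℕ) (hq : 0 < q) (x : Fin N → ℕ)
    (hx : ∑ i, x i = q) (hqn : q ≤ 2 ^ n) :
    ∀ d a b, b = a + 2 ^ d * q → b ≤ 2 ^ n * q →
      ∃ c ≤ W d (IB x n a b),
        Realizable2 (S0 N q) {halfSwitch N} (nodeVec x n a b) c := by
  have hBN : Bnd x n N = 2 ^ n * q := by
    unfold Bnd
    rw [cum_total x le_rfl, hx]
  intro d
  induction d with
  | zero =>
    intro a b hb hb2
    rw [pow_zero, one_mul] at hb
    refine ⟨0, Nat.zero_le _, Realizable2.free ?_⟩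
    exact leaf_free q n hq x hqn a b hb (by omega)
  | succ d ih =>
    intro a b hb hb2
    by_cases hIB : IB x n a b = 0
    · refine ⟨0, Nat.zero_le _, Realizable2.free ?_⟩
      exact leaf_IB0 q n hq x (d + 1) a b hb (by omega) hIB
    · -- split at the midpoint
      have hN2 : 2 ≤ N := by
        by_contra hc
        apply hIB
        unfold IB
        rw [Finset.card_eq_zero, Finset.filter_eq_empty_iff]
        intro s hs
        rw [Finset.mem_Ioo] at hs
        omega
      have hpq : 0 < 2 ^ d * q := Nat.mul_pos (by positivity) hq
      have hpow : 2 ^ (d + 1) * q = 2 ^ d * q + 2 ^ d * q := by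
        rw [pow_succ]
        ring
      set m := a + 2 ^ d * q with hm
      have ham : a < m := by omega
      have hmb : m < b := by omega
      obtain ⟨c₁, hc₁, H₁⟩ := ih a m rfl (by omega)
      obtain ⟨c₂, hc₂, H₂⟩ := ih m b (by omega) hb2
      obtain ⟨k₀, hsl, hsr⟩ := node_sep hN x n a m b
      have hl1 : ∑ j, nodeVec x n a m j = 1 := node_sum_one x n a m ham (by omega)
      have hr1 : ∑ j, nodeVec x n m b j = 1 := node_sum_one x n m b hmb (by omega)
      have heq : nodeVec x n a b
          = smax (smin (halfSwitch N) (nodeVec x n m b)) (nodeVec x n a m) := by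
        rw [mix hN2 (nodeVec x n a m) (nodeVec x n m b) hl1 hr1 k₀ hsl hsr]
        exact node_half x n a m b (by omega) ham
      have hIB1 : 1 ≤ IB x n a b := by omega
      have hIBs := IB_split x n a m b ham.le hmb.le
      have hW := W_step d hIB1 hIBs
      refine ⟨1 + c₂ + c₁, ?_, ?_⟩
      · have := W_mono d (le_refl (IB x n a m))
        omega
      · rw [heq]
        exact Realizable2.parallel
          (Realizable2.series (Realizable2.paid (Set.mem_singleton _)) H₂) H₁

end StateReductionAux

/-- State Reduction: any `(x₀/q, …, x_{N-1}/q)` can be built from point masses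
and two-active-state probability vectors with entries that are integer multiples
of `1/q` (cost 0 each) together with `N`-state ½-pswitches (cost 1 each), at
total cost at most `f(⌈log₂ q⌉, N)`. -/
theorem state_reduction (N : ℕ) (hN : 1 ≤ N) (q : ℕ) (hq : 1 ≤ q)
    (x : Fin N → ℕ) (hx : ∑ k, x k = q) :
    ∃ m ≤ f (Nat.clog 2 q) N,
      Realizable2
        {v : Fin N → ℝ | IsProbVec v ∧ (Finset.univ.filter fun i => v i ≠ 0).card ≤ 2 ∧
          ∀ i, ∃ c : ℕ, v i = (c : ℝ) / q}
        {halfSwitch N}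
        (fun k => (x k : ℝ) / q) m := by
  classical
  set n := Nat.clog 2 q with hn
  have hqn : q ≤ 2 ^ n := Nat.le_pow_clog (by norm_num) q
  obtain ⟨c, hc, H⟩ := StateReductionAux.rec_main hN q n hq x hx hqn n 0 (2 ^ n * q)
    (by omega) le_rfl
  have hBN : StateReductionAux.Bnd x n N = 2 ^ n * q := by
    unfold StateReductionAux.Bnd
    rw [StateReductionAux.cum_total x le_rfl, hx]
  have htop : StateReductionAux.nodeVec x n 0 (2 ^ n * q) = fun k => (x k : ℝ) / q := by
    funext k
    unfold StateReductionAux.nodeVec StateReductionAux.nodeNum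
    have hcl : ∀ s : ℕ, s ≤ N →
        min (2 ^ n * q) (max 0 (StateReductionAux.Bnd x n s)) = StateReductionAux.Bnd x n s := by
      intro s hs
      have := StateReductionAux.Bnd_mono x n hs
      rw [hBN] at this
      omega
    rw [hcl ((k : ℕ) + 1) k.isLt, hcl (k : ℕ) (le_of_lt (lt_of_lt_of_le k.isLt (Nat.le_succ N |> fun _ => le_refl N)))]
    have hdiff : StateReductionAux.Bnd x n ((k : ℕ) + 1) - StateReductionAux.Bnd x n (k : ℕ)
        = 2 ^ n * x k := by
      unfold StateReductionAux.Bnd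
      rw [StateReductionAux.cum_succ]
      have : 2 ^ n * (StateReductionAux.cum x (k : ℕ) + x k)
          = 2 ^ n * StateReductionAux.cum x (k : ℕ) + 2 ^ n * x k := by ring
      omega
    rw [hdiff, show (2 ^ n * q - 0 : ℕ) = 2 ^ n * q by omega]
    push_cast
    rw [mul_comm ((2:ℝ) ^ n) (x k : ℝ), mul_comm ((2:ℝ) ^ n) (q : ℝ),
      mul_div_mul_right _ _ (by positivity : ((2:ℝ) ^ n) ≠ 0)]
  refine ⟨c, ?_, ?_⟩
  · calc c ≤ StateReductionAux.W n (StateReductionAux.IB x n 0 (2 ^ n * q)) := hc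
      _ ≤ StateReductionAux.W n (N - 1) :=
        StateReductionAux.W_mono n (StateReductionAux.IB_le x n 0 (2 ^ n * q))
      _ ≤ f n N := StateReductionAux.W_le_f n N
  · rw [← htop]
    exact H
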